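/- Let n ≥ m ≥ 1 and let B_1,…,B_m be pairwise disjoint closed balls in ℝⁿ of positive radii whose centers are affinely independent; let μ_j denote Lebesgue measure restricted to B_j. If H(a_1,c_1),…,H(a_k,c_k) are hyperplanes whose unit normals a_1,…,a_k are linearly independent and each of which bisects every μ_j, then k ≤ n − m + 1. -/

import Mathlib

open MeasureTheory

noncomputable section

/-- A hyperplane bisecting the uniform measure on a closed ball of positive radius
passes through its center. -/
lemma center_of_bisects_aux {n : ℕ} (a : EuclideanSpace ℝ (Fin n)) (c : ℝ)
    (p : EuclideanSpace ℝ (Fin n)) (r : ℝ) (hr : 0 < r)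
    (hle' : (volume.restrict (Metric.closedBall p r)) {u | (inner ℝ u a : ℝ) ≤ c}
      = (volume.restrict (Metric.closedBall p r)) Set.univ / 2)
    (hge' : (volume.restrict (Metric.closedBall p r)) {u | c ≤ (inner ℝ u a : ℝ)}
      = (volume.restrict (Metric.closedBall p r)) Set.univ / 2) :
    (inner ℝ p a : ℝ) = c := by
  set B := Metric.closedBall p r with hB
  have hconta : Continuous fun u : EuclideanSpace ℝ (Fin n) => (inner ℝ u a : ℝ) :=
    continuous_id.inner continuous_const
  have hmle : ∀ t : ℝ, MeasurableSet {u : EuclideanSpace ℝ (Fin n) | (inner ℝ u a : ℝ) ≤ t} :=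
    fun t => measurableSet_le hconta.measurable measurable_const
  have hmge : ∀ t : ℝ, MeasurableSet {u : EuclideanSpace ℝ (Fin n) | t ≤ (inner ℝ u a : ℝ)} :=
    fun t => measurableSet_le measurable_const hconta.measurable
  set V := volume B with hV
  have hVtop : V ≠ ⊤ := (MeasureTheory.measure_closedBall_lt_top).ne
  have hge : volume ({u : EuclideanSpace ℝ (Fin n) | c ≤ (inner ℝ u a : ℝ)} ∩ B) = V / 2 := by
    have := hge'
    rwa [Measure.restrict_apply (hmge c), Measure.restrict_apply_univ] at this
  have hle : volume ({u : EuclideanSpace ℝ (Fin n) | (inner ℝ u a : ℝ) ≤ c} ∩ B) = V / 2 := by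
    have := hle'
    rwa [Measure.restrict_apply (hmle c), Measure.restrict_apply_univ] at this
  set c₀ : ℝ := (inner ℝ p a : ℝ) with hc₀
  have hinner : ∀ u : EuclideanSpace ℝ (Fin n),
      (inner ℝ ((2:ℝ)•p - u) a : ℝ) = 2 * c₀ - (inner ℝ u a : ℝ) := by
    intro u
    rw [inner_sub_left, real_inner_smul_left, hc₀]
  have hdistr : ∀ u : EuclideanSpace ℝ (Fin n), dist ((2:ℝ)•p - u) p = dist u p := by
    intro u
    rw [dist_eq_norm, dist_eq_norm]
    have : (2:ℝ)•p - u - p = -(u - p) := by rw [two_smul]; abel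
    rw [this, norm_neg]
  have hrefl : volume ({u : EuclideanSpace ℝ (Fin n) | (inner ℝ u a : ℝ) ≤ 2 * c₀ - c} ∩ B)
      = V / 2 := by
    have hmp : MeasurePreserving (fun u : EuclideanSpace ℝ (Fin n) => (2:ℝ)•p - u)
        volume volume := by
      have h1 : MeasurePreserving (fun u : EuclideanSpace ℝ (Fin n) => ((2:ℝ)•p) + u)
          volume volume := measurePreserving_add_left volume _
      have h2 : MeasurePreserving (fun u : EuclideanSpace ℝ (Fin n) => -u) volume volume :=
        Measure.measurePreserving_neg volume
      simpa [Function.comp_def, sub_eq_add_neg] using h1.comp h2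
    have hpre : (fun u : EuclideanSpace ℝ (Fin n) => (2:ℝ)•p - u) ⁻¹'
        ({u : EuclideanSpace ℝ (Fin n) | (inner ℝ u a : ℝ) ≤ 2 * c₀ - c} ∩ B)
        = {u : EuclideanSpace ℝ (Fin n) | c ≤ (inner ℝ u a : ℝ)} ∩ B := by
      ext u
      simp only [Set.mem_preimage, Set.mem_inter_iff, Set.mem_setOf_eq, hB,
        Metric.mem_closedBall, hinner u, hdistr u]
      constructor
      · rintro ⟨h1, h2⟩; exact ⟨by linarith, h2⟩
      · rintro ⟨h1, h2⟩; exact ⟨by linarith, h2⟩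
    rw [← hge, ← hpre, hmp.measure_preimage
      (((hmle _).inter measurableSet_closedBall).nullMeasurableSet)]
  by_contra hne
  have hne' : c₀ ≠ c := hne
  set lo := min c (2 * c₀ - c) with hlo
  set hi := max c (2 * c₀ - c) with hhi
  have hlolt : lo < c₀ := by
    rcases lt_or_gt_of_ne hne' with h' | h'
    · exact lt_of_le_of_lt (min_le_right _ _) (by linarith)
    · exact lt_of_le_of_lt (min_le_left _ _) (by linarith)
  have hhigt : c₀ < hi := by
    rcases lt_or_gt_of_ne hne' with h' | h'
    · exact lt_of_lt_of_le h' (le_max_left _ _)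
    · exact lt_of_lt_of_le (by linarith) (le_max_right _ _)
  have hglo : volume ({u : EuclideanSpace ℝ (Fin n) | (inner ℝ u a : ℝ) ≤ lo} ∩ B) = V / 2 := by
    rcases min_cases c (2 * c₀ - c) with ⟨h1, _⟩ | ⟨h1, _⟩ <;> rw [hlo, h1]
    · exact hle
    · exact hrefl
  have hghi : volume ({u : EuclideanSpace ℝ (Fin n) | (inner ℝ u a : ℝ) ≤ hi} ∩ B) = V / 2 := by
    rcases max_cases c (2 * c₀ - c) with ⟨h1, _⟩ | ⟨h1, _⟩ <;> rw [hhi, h1]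
    · exact hle
    · exact hrefl
  set S := {u : EuclideanSpace ℝ (Fin n) | lo < (inner ℝ u a : ℝ) ∧ (inner ℝ u a : ℝ) < hi}
    ∩ Metric.ball p r with hS
  have hSopen : IsOpen S := by
    apply IsOpen.inter _ Metric.isOpen_ball
    exact (isOpen_lt continuous_const hconta).inter (isOpen_lt hconta continuous_const)
  have hSne : S.Nonempty := ⟨p, ⟨hlolt, hhigt⟩, Metric.mem_ball_self hr⟩
  have hSpos : 0 < volume S := hSopen.measure_pos volume hSne
  have hsub : ({u : EuclideanSpace ℝ (Fin n) | (inner ℝ u a : ℝ) ≤ lo} ∩ B) ∪ S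
      ⊆ {u : EuclideanSpace ℝ (Fin n) | (inner ℝ u a : ℝ) ≤ hi} ∩ B := by
    rintro u (⟨h1, h2⟩ | ⟨⟨h1, h2⟩, h3⟩)
    · exact ⟨le_trans h1 (le_of_lt (lt_trans hlolt hhigt)), h2⟩
    · exact ⟨le_of_lt h2, Metric.ball_subset_closedBall h3⟩
  have hdisj2 : Disjoint ({u : EuclideanSpace ℝ (Fin n) | (inner ℝ u a : ℝ) ≤ lo} ∩ B) S := by
    rw [Set.disjoint_left]
    rintro u ⟨h1, _⟩ ⟨⟨h2, _⟩, _⟩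
    exact absurd h1 (not_le.mpr h2)
  have hle2 : V / 2 + volume S ≤ V / 2 := by
    have h' := measure_mono (μ := volume) hsub
    rwa [measure_union hdisj2 hSopen.measurableSet, hglo, hghi] at h'
  have hV2top : V / 2 ≠ ⊤ := by simp [ENNReal.div_eq_top, hVtop]
  have hS0 : volume S = 0 := by
    by_contra h0
    exact absurd hle2 (not_le.mpr (by simpa using ENNReal.lt_add_right hV2top h0))
  exact absurd hS0 (ne_of_gt hSpos)

/-- The hyperplane `{u : ⟨u,a⟩ = c}` with unit normal `a` and offset `c` bisects the
measure `μ`: both closed half-spaces carry exactly half of the total mass. -/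
def Bisects {n : ℕ} (a : EuclideanSpace ℝ (Fin n)) (c : ℝ)
    (μ : Measure (EuclideanSpace ℝ (Fin n))) : Prop :=
  μ {u | c ≤ (inner ℝ u a : ℝ)} = μ Set.univ / 2 ∧
  μ {u | (inner ℝ u a : ℝ) ≤ c} = μ Set.univ / 2

/-- Let `B_1,…,B_m` be pairwise disjoint closed balls of positive radii in
`ℝⁿ` with affinely independent centers, `μ_j` Lebesgue measure restricted to `B_j`. Any
family of hyperplanes with linearly independent unit normals, each bisecting every `μ_j`,
has at most `n − m + 1` members. -/
theorem stmt16 (n m k : ℕ) (hm : 1 ≤ m) (hmn : m ≤ n)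
    (p : Fin m → EuclideanSpace ℝ (Fin n)) (rad : Fin m → ℝ)
    (hrad : ∀ j, 0 < rad j)
    (hdisj : ∀ i j, i ≠ j →
      Disjoint (Metric.closedBall (p i) (rad i)) (Metric.closedBall (p j) (rad j)))
    (haff : AffineIndependent ℝ p)
    (a : Fin k → EuclideanSpace ℝ (Fin n)) (c : Fin k → ℝ)
    (hunit : ∀ i, ‖a i‖ = 1) (hli : LinearIndependent ℝ a)
    (hbis : ∀ i j, Bisects (a i) (c i)
      (volume.restrict (Metric.closedBall (p j) (rad j)))) :
    k ≤ n - m + 1 := by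
  have hctr : ∀ i j, (inner ℝ (p j) (a i) : ℝ) = c i := fun i j =>
    center_of_bisects_aux (a i) (c i) (p j) (rad j) (hrad j) (hbis i j).2 (hbis i j).1
  set j₀ : Fin m := ⟨0, hm⟩
  set W := Submodule.span ℝ (Set.range (fun j : {x : Fin m // x ≠ j₀} => p ↑j - p j₀)) with hW
  have hliW : LinearIndependent ℝ (fun j : {x : Fin m // x ≠ j₀} => p ↑j - p j₀) := by
    have := (affineIndependent_iff_linearIndependent_vsub ℝ p j₀).mp haff
    simpa [vsub_eq_sub] using this
  have hfinW : Module.finrank ℝ W = m - 1 := by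
    rw [hW, finrank_span_eq_card hliW, Fintype.card_subtype_compl,
      Fintype.card_subtype_eq, Fintype.card_fin]
  have hmem : ∀ i, a i ∈ Wᗮ := by
    intro i
    rw [Submodule.mem_orthogonal]
    intro u hu
    induction hu using Submodule.span_induction with
    | mem x hx =>
      obtain ⟨j, rfl⟩ := hx
      rw [inner_sub_left, hctr i j, hctr i j₀, sub_self]
    | zero => exact inner_zero_left _
    | add x y _ _ hx hy => rw [inner_add_left, hx, hy, add_zero]
    | smul t x _ hx => rw [real_inner_smul_left, hx, mul_zero]
  have hspan : Submodule.span ℝ (Set.range a) ≤ Wᗮ := by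
    rw [Submodule.span_le]
    rintro x ⟨i, rfl⟩
    exact hmem i
  have hk : k ≤ Module.finrank ℝ Wᗮ := by
    have := Submodule.finrank_mono hspan
    rwa [finrank_span_eq_card hli, Fintype.card_fin] at this
  have hsum : Module.finrank ℝ W + Module.finrank ℝ Wᗮ = n := by
    rw [Submodule.finrank_add_finrank_orthogonal, finrank_euclideanSpace_fin]
  omega
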